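/- The objective function of the regularized maximum-likelihood problem is strictly convex: for any fixed nonnegative symmetric weight matrices Λ ∈ ℝ^{m₁×m₁} and Γ ∈ ℝ^{m₂×m₂}, the function S ↦ ℓ(y^N; S) + g(S; Λ, Γ) is strictly convex on the convex set Q⁺ of parameters S = (S₀,...,Sₙ) for which Σ_S(θ) is positive definite for every θ ∈ [−π, π]. -/

import Mathlib

open MeasureTheory Matrix Finset
open scoped ComplexOrder

noncomputable section

namespace KroneckerGM

/-- Row/column indices of `m₁m₂ × m₁m₂` matrices, as pairs `(h,k)` (row `(h-1)m₂+k`). -/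
abbrev Idx (m₁ m₂ : ℕ) := Fin m₁ × Fin m₂

/-- A real `m₁m₂ × m₁m₂` matrix, indexed by pairs. -/
abbrev Mat (m₁ m₂ : ℕ) := Matrix (Idx m₁ m₂) (Idx m₁ m₂) ℝ

/-- A parameter is a tuple `S = (S₀, ..., Sₙ)` of real `m × m` matrices. -/
abbrev Param (m₁ m₂ n : ℕ) := Fin (n + 1) → Mat m₁ m₂

/-- The Hermitian matrix function
`Σ_S(θ) = S₀ + (1/2) ∑_{t=1}^n (Sₜ e^{-itθ} + Sₜᵀ e^{itθ})`. -/
def sigmaMat {m₁ m₂ n : ℕ} (S : Param m₁ m₂ n) (θ : ℝ) :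
    Matrix (Idx m₁ m₂) (Idx m₁ m₂) ℂ :=
  (S 0).map (fun a => (a : ℂ)) +
    (1 / 2 : ℂ) • ∑ t ∈ Finset.Ioi (0 : Fin (n + 1)),
      (Complex.exp (-(((t : ℕ) : ℂ) * θ) * Complex.I) • (S t).map (fun a => (a : ℂ)) +
        Complex.exp ((((t : ℕ) : ℂ) * θ) * Complex.I) • ((S t)ᵀ).map (fun a => (a : ℂ)))

/-- The set `Q⁺` of parameters `S` with `S₀` symmetric and `Σ_S(θ)` positive definite
for every `θ ∈ [-π, π]`. -/
def Qplus (m₁ m₂ n : ℕ) : Set (Param m₁ m₂ n) :=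
  {S | (S 0)ᵀ = S 0 ∧ ∀ θ ∈ Set.Icc (-Real.pi) Real.pi, (sigmaMat S θ).PosDef}

/-- Sample covariances `R̂_s = (1/(N-n)) ∑_{t=1}^{N-s} y(t) y(t+s)ᵀ`. -/
def Rhat (m₁ m₂ n N : ℕ) (y : ℕ → Idx m₁ m₂ → ℝ) (s : ℕ) : Mat m₁ m₂ :=
  (1 / ((N : ℝ) - (n : ℝ))) •
    ∑ t ∈ Finset.Icc 1 (N - s), Matrix.vecMulVec (y t) (y (t + s))

/-- The truncated periodogram
`Φ̂_p(θ) = R̂₀ + (1/2) ∑_{s=1}^n (R̂_s e^{-isθ} + R̂_sᵀ e^{isθ})`. -/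
def PhiP (m₁ m₂ n N : ℕ) (y : ℕ → Idx m₁ m₂ → ℝ) (θ : ℝ) :
    Matrix (Idx m₁ m₂) (Idx m₁ m₂) ℂ :=
  (Rhat m₁ m₂ n N y 0).map (fun a => (a : ℂ)) +
    (1 / 2 : ℂ) • ∑ s ∈ Finset.Icc 1 n,
      (Complex.exp (-((s : ℂ) * θ) * Complex.I) • (Rhat m₁ m₂ n N y s).map (fun a => (a : ℂ)) +
        Complex.exp (((s : ℂ) * θ) * Complex.I) • ((Rhat m₁ m₂ n N y s)ᵀ).map (fun a => (a : ℂ)))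

/-- Approximate negative log-likelihood
`ℓ(y^N; S) = ((N-n)/(4π)) ∫_{-π}^{π} [-log det Σ_S(θ) + Re tr(Φ̂_p(θ) Σ_S(θ))] dθ`. -/
def ell (m₁ m₂ n N : ℕ) (y : ℕ → Idx m₁ m₂ → ℝ) (S : Param m₁ m₂ n) : ℝ :=
  (((N : ℝ) - (n : ℝ)) / (4 * Real.pi)) *
    ∫ θ in (-Real.pi)..Real.pi,
      (-Real.log ((sigmaMat S θ).det.re) +
        ((PhiP m₁ m₂ n N y θ) * (sigmaMat S θ)).trace.re)

/-- `q_{hk,jl}(S)`: the maximum of the absolute values of the four groups of entries. -/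
def qfun {m₁ m₂ n : ℕ} (S : Param m₁ m₂ n) (h j : Fin m₁) (k l : Fin m₂) : ℝ :=
  max
    (max (Finset.univ.sup' Finset.univ_nonempty fun t : Fin (n + 1) => |S t (h, k) (j, l)|)
      (Finset.univ.sup' Finset.univ_nonempty fun t : Fin (n + 1) => |S t (h, l) (j, k)|))
    (max (Finset.univ.sup' Finset.univ_nonempty fun t : Fin (n + 1) => |S t (j, l) (h, k)|)
      (Finset.univ.sup' Finset.univ_nonempty fun t : Fin (n + 1) => |S t (j, k) (h, l)|))

/-- The index set `T = {(h,k,j,l) : h ≥ j, k ≥ l}`. -/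
def Tset (m₁ m₂ : ℕ) : Finset (Fin m₁ × Fin m₂ × Fin m₁ × Fin m₂) :=
  Finset.univ.filter fun p => p.2.2.1 ≤ p.1 ∧ p.2.2.2 ≤ p.2.1

/-- The max-prior penalty `g(S; Λ, Γ) = ∑_{(h,k,j,l)∈T} max{λ_{hj}, γ_{kl}} q_{hk,jl}(S)`. -/
def gpen {m₁ m₂ n : ℕ} (Λ : Matrix (Fin m₁) (Fin m₁) ℝ) (Γ : Matrix (Fin m₂) (Fin m₂) ℝ)
    (S : Param m₁ m₂ n) : ℝ :=
  ∑ p ∈ Tset m₁ m₂,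
    max (Λ p.1 p.2.2.1) (Γ p.2.1 p.2.2.2) * qfun S p.1 p.2.2.1 p.2.1 p.2.2.2


/-! ### Auxiliary lemmas -/

section MatrixAux

variable {ι : Type*} [Fintype ι] [DecidableEq ι]

lemma posDef_conj_of_isUnit {B C : Matrix ι ι ℂ} (hB : B.PosDef) (hC : IsUnit C.det) :
    (Cᴴ * B * C).PosDef := by
  refine Matrix.PosDef.of_dotProduct_mulVec_pos (isHermitian_conjTranspose_mul_mul C hB.1) fun x hx => ?_
  have hinj : Function.Injective C.mulVec := by
    rw [Matrix.mulVec_injective_iff_isUnit]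
    exact (Matrix.isUnit_iff_isUnit_det C).mpr hC
  have hCx : C *ᵥ x ≠ 0 := fun h0 => hx (hinj (by simpa using h0))
  simpa only [star_mulVec, dotProduct_mulVec, vecMul_vecMul] using hB.dotProduct_mulVec_pos hCx

omit [DecidableEq ι] in
lemma posDef_ofReal_smul {a : ℝ} (ha : 0 < a) {M : Matrix ι ι ℂ} (hM : M.PosDef) :
    ((a : ℂ) • M).PosDef := by
  refine Matrix.PosDef.of_dotProduct_mulVec_pos ?_ fun x hx => ?_
  · unfold Matrix.IsHermitian
    rw [conjTranspose_smul, hM.1.eq]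
    congr 1
    simp [Complex.ext_iff]
  · have h := hM.dotProduct_mulVec_pos hx
    have h2 : (star x) ⬝ᵥ (((a:ℂ) • M) *ᵥ x) = (a:ℂ) * ((star x) ⬝ᵥ (M *ᵥ x)) := by
      rw [Matrix.smul_mulVec, dotProduct_smul, smul_eq_mul]
    rw [h2]
    rw [Complex.lt_def] at h ⊢
    constructor
    · simpa using mul_pos ha h.1
    · simp [← h.2]

lemma posDef_det_re_pos {M : Matrix ι ι ℂ} (hM : M.PosDef) : 0 < M.det.re := by
  have := hM.det_pos
  rw [Complex.lt_def] at this
  simpa using this.1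

lemma posDef_det_eq_ofReal_re {M : Matrix ι ι ℂ} (hM : M.PosDef) : M.det = (M.det.re : ℂ) := by
  have := hM.det_pos
  rw [Complex.lt_def] at this
  exact Complex.ext rfl (by simpa using this.2.symm)

lemma det_unitary_conj (U : Matrix.unitaryGroup ι ℂ) (X : Matrix ι ι ℂ) :
    ((U : Matrix ι ι ℂ) * X * (star U : Matrix ι ι ℂ)).det = X.det := by
  rw [Matrix.det_mul, Matrix.det_mul, mul_comm, ← mul_assoc, ← Matrix.det_mul]
  have h1 : (star U : Matrix ι ι ℂ) * (U : Matrix ι ι ℂ) = 1 :=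
    Matrix.UnitaryGroup.star_mul_self U
  rw [h1, Matrix.det_one, one_mul]

open scoped MatrixOrder in
/-- strict concavity of `log ∘ det` on positive definite complex matrices -/
lemma logdet_strict_concave {A B : Matrix ι ι ℂ} (hA : A.PosDef) (hB : B.PosDef) (hAB : A ≠ B)
    {a b : ℝ} (ha : 0 < a) (hb : 0 < b) (hab : a + b = 1) :
    a * Real.log A.det.re + b * Real.log B.det.re <
      Real.log (((a : ℂ) • A + (b : ℂ) • B).det.re) := by
  classical
  set R := CFC.sqrt A with hRdef
  have hRps : R.PosSemidef := (CFC.sqrt_nonneg A).posSemidef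
  have hRH : Rᴴ = R := hRps.1
  have hRR : R * R = A := CFC.sqrt_mul_sqrt_self A hA.posSemidef.nonneg
  have hdetA : (0:ℝ) < A.det.re := posDef_det_re_pos hA
  have hdetAne : A.det ≠ 0 := by
    rw [posDef_det_eq_ofReal_re hA]
    exact_mod_cast hdetA.ne'
  have hRdet : IsUnit R.det := by
    rw [isUnit_iff_ne_zero]
    intro h
    apply hdetAne
    rw [← hRR, Matrix.det_mul, h, mul_zero]
  have hRinvdet : IsUnit R⁻¹.det := by
    rwa [Matrix.det_nonsing_inv, isUnit_ringInverse]
  have hRinvH : (R⁻¹)ᴴ = R⁻¹ := by rw [Matrix.conjTranspose_nonsing_inv, hRH]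
  set M := R⁻¹ * B * R⁻¹ with hMdef
  have hM : M.PosDef := by
    have := posDef_conj_of_isUnit hB hRinvdet
    rwa [hRinvH] at this
  have hBRMR : R * M * R = B := by
    rw [hMdef, ← Matrix.mul_assoc, ← Matrix.mul_assoc, Matrix.mul_nonsing_inv _ hRdet,
      Matrix.one_mul, Matrix.mul_assoc, Matrix.nonsing_inv_mul _ hRdet, Matrix.mul_one]
  set ev := hM.1.eigenvalues with hevdef
  have hev : ∀ i, 0 < ev i := hM.eigenvalues_pos
  set U := hM.1.eigenvectorUnitary with hUdef
  have hspec : M = (U : Matrix ι ι ℂ) * Matrix.diagonal (RCLike.ofReal ∘ ev) *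
      (star U : Matrix ι ι ℂ) := hM.1.spectral_theorem
  have hcombo : (a : ℂ) • A + (b : ℂ) • B = R * ((a:ℂ) • 1 + (b:ℂ) • M) * R := by
    rw [Matrix.mul_add, Matrix.add_mul, Matrix.mul_smul, Matrix.smul_mul,
      Matrix.mul_smul, Matrix.smul_mul, Matrix.mul_one, hRR, hBRMR]
  have hmid : (a:ℂ) • (1 : Matrix ι ι ℂ) + (b:ℂ) • M =
      (U : Matrix ι ι ℂ) * Matrix.diagonal (fun i => (a:ℂ) + (b:ℂ) * (ev i : ℂ)) *
        (star U : Matrix ι ι ℂ) := by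
    have hU1 : (U : Matrix ι ι ℂ) * (star U : Matrix ι ι ℂ) = 1 :=
      (Matrix.mem_unitaryGroup_iff).mp U.2
    rw [hspec]
    rw [show Matrix.diagonal (fun i => (a:ℂ) + (b:ℂ) * (ev i : ℂ)) =
        (a:ℂ) • 1 + (b:ℂ) • Matrix.diagonal (RCLike.ofReal ∘ ev) by
      rw [← Matrix.diagonal_one, ← Matrix.diagonal_smul, ← Matrix.diagonal_smul,
        Matrix.diagonal_add]
      congr 1
      funext i
      simp [Pi.smul_apply, smul_eq_mul]]
    rw [Matrix.mul_add, Matrix.add_mul, Matrix.mul_smul, Matrix.smul_mul, Matrix.mul_one, hU1,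
      Matrix.mul_smul, Matrix.smul_mul]
  have hdetmid : ((a:ℂ) • (1 : Matrix ι ι ℂ) + (b:ℂ) • M).det =
      ∏ i, ((a:ℂ) + (b:ℂ) * (ev i : ℂ)) := by
    rw [hmid, det_unitary_conj, Matrix.det_diagonal]
  have hdetRR : R.det * R.det = A.det := by rw [← Matrix.det_mul, hRR]
  have hdetcombo : ((a : ℂ) • A + (b : ℂ) • B).det =
      A.det * ∏ i, ((a:ℂ) + (b:ℂ) * (ev i : ℂ)) := by
    rw [hcombo, Matrix.det_mul, Matrix.det_mul, hdetmid, mul_comm R.det, mul_assoc, hdetRR,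
      mul_comm]
  have hdetM : M.det = ∏ i, (ev i : ℂ) := hM.1.det_eq_prod_eigenvalues
  have hdetB : B.det = A.det * ∏ i, (ev i : ℂ) := by
    rw [← hBRMR, Matrix.det_mul, Matrix.det_mul, hdetM, mul_comm R.det, mul_assoc, hdetRR,
      mul_comm]
  have hAre : A.det = ((A.det.re : ℝ) : ℂ) := posDef_det_eq_ofReal_re hA
  have hprod1 : (∏ i, ((a:ℂ) + (b:ℂ) * (ev i : ℂ))) = ((∏ i, (a + b * ev i) : ℝ) : ℂ) := by
    rw [Complex.ofReal_prod]
    exact Finset.prod_congr rfl fun i _ => by push_cast; ring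
  have hprod2 : (∏ i, ((ev i : ℝ) : ℂ)) = ((∏ i, ev i : ℝ) : ℂ) := by
    rw [Complex.ofReal_prod]
  have hcombore : ((a : ℂ) • A + (b : ℂ) • B).det.re = A.det.re * ∏ i, (a + b * ev i) := by
    rw [hdetcombo, hAre, hprod1, ← Complex.ofReal_mul, Complex.ofReal_re]
    simp
  have hBre : B.det.re = A.det.re * ∏ i, ev i := by
    rw [hdetB, hAre, hprod2, ← Complex.ofReal_mul, Complex.ofReal_re]
    simp
  have hex : ∃ i, ev i ≠ 1 := by
    by_contra h
    push_neg at h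
    apply hAB
    have hM1 : M = 1 := by
      rw [hspec]
      have hfun : (RCLike.ofReal ∘ ev : ι → ℂ) = fun _ => 1 := funext fun i => by simp [h i]
      rw [hfun]
      have : Matrix.diagonal (fun _ : ι => (1:ℂ)) = 1 := Matrix.diagonal_one
      rw [this, Matrix.mul_one]
      exact (Matrix.mem_unitaryGroup_iff).mp U.2
    rw [← hRR, ← hBRMR, hM1, Matrix.mul_one]
  have hpos : ∀ i, 0 < a + b * ev i := fun i => by have := hev i; nlinarith
  have hkey : ∀ i, b * Real.log (ev i) ≤ Real.log (a + b * ev i) := by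
    intro i
    rcases eq_or_ne (ev i) 1 with h1 | h1
    · simp [h1, hab]
    · have := strictConcaveOn_log_Ioi.2 (Set.mem_Ioi.mpr one_pos)
        (Set.mem_Ioi.mpr (hev i)) (Ne.symm h1) ha hb hab
      simp only [smul_eq_mul, Real.log_one, mul_zero, mul_one, zero_add] at this
      linarith
  have hkeystrict : ∀ i, ev i ≠ 1 → b * Real.log (ev i) < Real.log (a + b * ev i) := by
    intro i h1
    have := strictConcaveOn_log_Ioi.2 (Set.mem_Ioi.mpr one_pos)
      (Set.mem_Ioi.mpr (hev i)) (Ne.symm h1) ha hb hab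
    simp only [smul_eq_mul, Real.log_one, mul_zero, mul_one, zero_add] at this
    linarith
  obtain ⟨i₀, hi₀⟩ := hex
  have hsum : ∑ i, b * Real.log (ev i) < ∑ i, Real.log (a + b * ev i) :=
    Finset.sum_lt_sum (fun i _ => hkey i) ⟨i₀, Finset.mem_univ i₀, hkeystrict i₀ hi₀⟩
  rw [hcombore, hBre, Real.log_mul hdetA.ne' (Finset.prod_pos (fun i _ => hpos i)).ne',
    Real.log_mul hdetA.ne' (Finset.prod_pos (fun i _ => hev i)).ne',
    Real.log_prod (fun i _ => (hpos i).ne'),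
    Real.log_prod (fun i _ => (hev i).ne')]
  have hb' : b * ∑ i, Real.log (ev i) = ∑ i, b * Real.log (ev i) := Finset.mul_sum _ _ _
  have h1 : a * Real.log A.det.re + b * Real.log A.det.re = Real.log A.det.re := by
    rw [← add_mul, hab, one_mul]
  rw [mul_add, hb']
  linarith [hsum]

lemma logdet_concave_le {A B : Matrix ι ι ℂ} (hA : A.PosDef) (hB : B.PosDef)
    {a b : ℝ} (ha : 0 < a) (hb : 0 < b) (hab : a + b = 1) :
    a * Real.log A.det.re + b * Real.log B.det.re ≤
      Real.log (((a : ℂ) • A + (b : ℂ) • B).det.re) := by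
  rcases eq_or_ne A B with rfl | hne
  · have hab' : (a:ℂ) + (b:ℂ) = 1 := by exact_mod_cast congrArg (Complex.ofReal) hab
    rw [← add_smul, hab', one_smul, ← add_mul, hab, one_mul]
  · exact (logdet_strict_concave hA hB hne ha hb hab).le

end MatrixAux

lemma exp_int_integral (k : ℤ) :
    (∫ θ in (-Real.pi)..Real.pi, Complex.exp ((k : ℂ) * θ * Complex.I)) =
      if k = 0 then (2 * (Real.pi : ℂ)) else 0 := by
  rcases eq_or_ne k 0 with rfl | hk
  · simp only [Int.cast_zero, zero_mul, Complex.exp_zero, if_pos rfl]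
    rw [intervalIntegral.integral_const]
    push_cast
    simp [two_mul]
  · rw [if_neg hk]
    have hc : ((k : ℂ) * Complex.I) ≠ 0 :=
      mul_ne_zero (by exact_mod_cast hk) Complex.I_ne_zero
    have hfun : (fun θ : ℝ => Complex.exp ((k : ℂ) * θ * Complex.I)) =
        fun θ : ℝ => Complex.exp (((k : ℂ) * Complex.I) * θ) := by
      funext θ; ring_nf
    rw [hfun, integral_exp_mul_complex hc]
    have hexp : Complex.exp ((k : ℂ) * Complex.I * (Real.pi : ℂ)) =
        Complex.exp ((k : ℂ) * Complex.I * ((-Real.pi : ℝ) : ℂ)) := by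
      rw [Complex.exp_eq_exp_iff_exists_int]
      exact ⟨k, by push_cast; ring⟩
    rw [hexp, sub_self, zero_div]

lemma continuous_expI (k : ℤ) :
    Continuous fun θ : ℝ => Complex.exp ((k : ℂ) * θ * Complex.I) := by
  apply Complex.continuous_exp.comp
  exact (continuous_const.mul Complex.continuous_ofReal).mul continuous_const

section SigmaAux

variable {m₁ m₂ n : ℕ}

lemma sigmaMat_entry (S : Param m₁ m₂ n) (θ : ℝ) (u v : Idx m₁ m₂) :
    sigmaMat S θ u v = ((S 0 u v : ℝ) : ℂ) +
      (1 / 2 : ℂ) * ∑ t ∈ Finset.Ioi (0 : Fin (n + 1)),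
        (Complex.exp (-(((t : ℕ) : ℂ) * θ) * Complex.I) * ((S t u v : ℝ) : ℂ) +
          Complex.exp ((((t : ℕ) : ℂ) * θ) * Complex.I) * ((S t v u : ℝ) : ℂ)) := by
  simp [sigmaMat, Matrix.add_apply, Matrix.smul_apply, Matrix.map_apply, Matrix.sum_apply,
    Matrix.transpose_apply, smul_eq_mul]

lemma sigmaMat_smul_add (S T : Param m₁ m₂ n) (a b : ℝ) (θ : ℝ) :
    sigmaMat (a • S + b • T) θ = (a : ℂ) • sigmaMat S θ + (b : ℂ) • sigmaMat T θ := by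
  ext u v
  have hsum : ∑ t ∈ Finset.Ioi (0 : Fin (n + 1)),
      (Complex.exp (-(((t : ℕ) : ℂ) * θ) * Complex.I) *
          ((a:ℂ) * ((S t u v : ℝ) : ℂ) + (b:ℂ) * ((T t u v : ℝ) : ℂ)) +
        Complex.exp ((((t : ℕ) : ℂ) * θ) * Complex.I) *
          ((a:ℂ) * ((S t v u : ℝ) : ℂ) + (b:ℂ) * ((T t v u : ℝ) : ℂ))) =
      (a:ℂ) * ∑ t ∈ Finset.Ioi (0 : Fin (n + 1)),
        (Complex.exp (-(((t : ℕ) : ℂ) * θ) * Complex.I) * ((S t u v : ℝ) : ℂ) +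
          Complex.exp ((((t : ℕ) : ℂ) * θ) * Complex.I) * ((S t v u : ℝ) : ℂ)) +
      (b:ℂ) * ∑ t ∈ Finset.Ioi (0 : Fin (n + 1)),
        (Complex.exp (-(((t : ℕ) : ℂ) * θ) * Complex.I) * ((T t u v : ℝ) : ℂ) +
          Complex.exp ((((t : ℕ) : ℂ) * θ) * Complex.I) * ((T t v u : ℝ) : ℂ)) := by
    rw [Finset.mul_sum, Finset.mul_sum, ← Finset.sum_add_distrib]
    exact Finset.sum_congr rfl fun t _ => by ring
  simp only [sigmaMat_entry, Matrix.add_apply, Matrix.smul_apply, Pi.add_apply, Pi.smul_apply,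
    smul_eq_mul]
  push_cast
  linear_combination (1/2 : ℂ) * hsum

lemma sigmaMat_sub (S T : Param m₁ m₂ n) (θ : ℝ) :
    sigmaMat (S - T) θ = sigmaMat S θ - sigmaMat T θ := by
  have h := sigmaMat_smul_add S T 1 (-1) θ
  have h2 : (1:ℝ) • S + (-1:ℝ) • T = S - T := by
    funext t; simp [sub_eq_add_neg]
  rw [h2] at h
  rw [h]
  push_cast
  module

lemma param_zero_of_sigmaMat_zero (D : Param m₁ m₂ n)
    (h : ∀ θ ∈ Set.Icc (-Real.pi) Real.pi, sigmaMat D θ = 0) : D = 0 := by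
  have hpi : (0:ℝ) < Real.pi := Real.pi_pos
  have hicc : Set.uIcc (-Real.pi) Real.pi = Set.Icc (-Real.pi) Real.pi :=
    Set.uIcc_of_le (by linarith)
  have h2pi : (2 * (Real.pi:ℂ)) ≠ 0 := by
    have : (2 * Real.pi : ℝ) ≠ 0 := by positivity
    exact_mod_cast this
  have key : ∀ (s : ℕ) (u v : Idx m₁ m₂),
      ((if (s:ℤ) = 0 then (2 * (Real.pi:ℂ)) else 0) * ((D 0 u v : ℝ) : ℂ)) +
        ∑ t ∈ Finset.Ioi (0 : Fin (n+1)),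
          ((1/2 : ℂ) * ((D t u v : ℝ) : ℂ) *
              (if (s:ℤ) - ((t:ℕ):ℤ) = 0 then (2 * (Real.pi:ℂ)) else 0) +
           (1/2 : ℂ) * ((D t v u : ℝ) : ℂ) *
              (if (s:ℤ) + ((t:ℕ):ℤ) = 0 then (2 * (Real.pi:ℂ)) else 0)) = 0 := by
    intro s u v
    have hpt : ∀ θ : ℝ, Complex.exp (((s:ℤ):ℂ) * θ * Complex.I) * (sigmaMat D θ u v) =
        ((D 0 u v : ℝ) : ℂ) * Complex.exp (((s:ℤ):ℂ) * θ * Complex.I) +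
        ∑ t ∈ Finset.Ioi (0 : Fin (n+1)),
          ((1/2 : ℂ) * ((D t u v : ℝ) : ℂ) *
              Complex.exp ((((s:ℤ) - ((t:ℕ):ℤ) : ℤ):ℂ) * θ * Complex.I) +
           (1/2 : ℂ) * ((D t v u : ℝ) : ℂ) *
              Complex.exp ((((s:ℤ) + ((t:ℕ):ℤ) : ℤ):ℂ) * θ * Complex.I)) := by
      intro θ
      rw [sigmaMat_entry, mul_add]
      congr 1
      · ring
      · rw [Finset.mul_sum, Finset.mul_sum]
        refine Finset.sum_congr rfl fun t _ => ?_
        have h1 : Complex.exp (((s:ℤ):ℂ) * θ * Complex.I) *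
            Complex.exp (-(((t:ℕ):ℂ) * θ) * Complex.I) =
            Complex.exp ((((s:ℤ) - ((t:ℕ):ℤ) : ℤ):ℂ) * θ * Complex.I) := by
          rw [← Complex.exp_add]; congr 1; push_cast; ring
        have h2 : Complex.exp (((s:ℤ):ℂ) * θ * Complex.I) *
            Complex.exp ((((t:ℕ):ℂ) * θ) * Complex.I) =
            Complex.exp ((((s:ℤ) + ((t:ℕ):ℤ) : ℤ):ℂ) * θ * Complex.I) := by
          rw [← Complex.exp_add]; congr 1; push_cast; ring
        linear_combination ((1/2 : ℂ) * ((D t u v : ℝ) : ℂ)) * h1 +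
          ((1/2 : ℂ) * ((D t v u : ℝ) : ℂ)) * h2
    have hzero : (∫ θ in (-Real.pi)..Real.pi,
        Complex.exp (((s:ℤ):ℂ) * θ * Complex.I) * (sigmaMat D θ u v)) = 0 := by
      rw [intervalIntegral.integral_congr (g := fun _ => (0:ℂ))
        (fun θ hθ => by rw [hicc] at hθ; rw [h θ hθ]; simp), intervalIntegral.integral_zero]
    have hInt1 : IntervalIntegrable
        (fun θ : ℝ => ((D 0 u v : ℝ) : ℂ) * Complex.exp (((s:ℤ):ℂ) * θ * Complex.I))
        volume (-Real.pi) Real.pi :=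
      (continuous_const.mul (continuous_expI s)).intervalIntegrable _ _
    have hIntT : ∀ t : Fin (n+1), IntervalIntegrable
        (fun θ : ℝ => (1/2 : ℂ) * ((D t u v : ℝ) : ℂ) *
              Complex.exp ((((s:ℤ) - ((t:ℕ):ℤ) : ℤ):ℂ) * θ * Complex.I) +
           (1/2 : ℂ) * ((D t v u : ℝ) : ℂ) *
              Complex.exp ((((s:ℤ) + ((t:ℕ):ℤ) : ℤ):ℂ) * θ * Complex.I))
        volume (-Real.pi) Real.pi := fun t =>
      ((continuous_const.mul (continuous_expI _)).add
        (continuous_const.mul (continuous_expI _))).intervalIntegrable _ _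
    calc ((if (s:ℤ) = 0 then (2 * (Real.pi:ℂ)) else 0) * ((D 0 u v : ℝ) : ℂ)) +
        ∑ t ∈ Finset.Ioi (0 : Fin (n+1)),
          ((1/2 : ℂ) * ((D t u v : ℝ) : ℂ) *
              (if (s:ℤ) - ((t:ℕ):ℤ) = 0 then (2 * (Real.pi:ℂ)) else 0) +
           (1/2 : ℂ) * ((D t v u : ℝ) : ℂ) *
              (if (s:ℤ) + ((t:ℕ):ℤ) = 0 then (2 * (Real.pi:ℂ)) else 0))
        = ∫ θ in (-Real.pi)..Real.pi,
            (((D 0 u v : ℝ) : ℂ) * Complex.exp (((s:ℤ):ℂ) * θ * Complex.I) +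
            ∑ t ∈ Finset.Ioi (0 : Fin (n+1)),
              ((1/2 : ℂ) * ((D t u v : ℝ) : ℂ) *
                  Complex.exp ((((s:ℤ) - ((t:ℕ):ℤ) : ℤ):ℂ) * θ * Complex.I) +
               (1/2 : ℂ) * ((D t v u : ℝ) : ℂ) *
                  Complex.exp ((((s:ℤ) + ((t:ℕ):ℤ) : ℤ):ℂ) * θ * Complex.I))) := by
          have hSum : IntervalIntegrable (fun θ : ℝ => ∑ t ∈ Finset.Ioi (0 : Fin (n+1)),
              ((1/2 : ℂ) * ((D t u v : ℝ) : ℂ) *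
                  Complex.exp ((((s:ℤ) - ((t:ℕ):ℤ) : ℤ):ℂ) * θ * Complex.I) +
               (1/2 : ℂ) * ((D t v u : ℝ) : ℂ) *
                  Complex.exp ((((s:ℤ) + ((t:ℕ):ℤ) : ℤ):ℂ) * θ * Complex.I)))
              volume (-Real.pi) Real.pi := by
            apply Continuous.intervalIntegrable
            apply continuous_finset_sum
            intro t _
            exact (continuous_const.mul (continuous_expI _)).add
              (continuous_const.mul (continuous_expI _))
          rw [intervalIntegral.integral_add hInt1 hSum,
            intervalIntegral.integral_finset_sum (fun t _ => hIntT t)]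
          rw [intervalIntegral.integral_const_mul, exp_int_integral]
          congr 1
          · ring
          · refine Finset.sum_congr rfl fun t _ => ?_
            rw [intervalIntegral.integral_add
              ((continuous_const.fun_mul (continuous_expI _)).intervalIntegrable _ _)
              ((continuous_const.fun_mul (continuous_expI _)).intervalIntegrable _ _),
              intervalIntegral.integral_const_mul, intervalIntegral.integral_const_mul,
              exp_int_integral, exp_int_integral]
      _ = ∫ θ in (-Real.pi)..Real.pi,
            Complex.exp (((s:ℤ):ℂ) * θ * Complex.I) * (sigmaMat D θ u v) :=
          (intervalIntegral.integral_congr (fun θ _ => (hpt θ).symm))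
      _ = 0 := hzero
  funext t
  by_cases ht : t = 0
  · subst ht
    ext u v
    have k0 := key 0 u v
    have hsz : ∀ x ∈ Finset.Ioi (0 : Fin (n+1)),
        ((1/2 : ℂ) * ((D x u v : ℝ) : ℂ) *
            (if ((0:ℕ):ℤ) - ((x:ℕ):ℤ) = 0 then (2 * (Real.pi:ℂ)) else 0) +
         (1/2 : ℂ) * ((D x v u : ℝ) : ℂ) *
            (if ((0:ℕ):ℤ) + ((x:ℕ):ℤ) = 0 then (2 * (Real.pi:ℂ)) else 0)) = 0 := by
      intro x hx
      have hxpos : 0 < (x:ℕ) := by have := Fin.lt_def.mp (Finset.mem_Ioi.mp hx); simpa using this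
      rw [if_neg (by omega), if_neg (by omega)]
      ring
    rw [Finset.sum_eq_zero hsz, add_zero, if_pos (by norm_num)] at k0
    have hD : ((D 0 u v : ℝ) : ℂ) = 0 := (mul_eq_zero.mp k0).resolve_left h2pi
    have : D 0 u v = 0 := by exact_mod_cast hD
    simpa using this
  · have htmem : t ∈ Finset.Ioi (0 : Fin (n+1)) := Finset.mem_Ioi.mpr (Fin.pos_of_ne_zero ht)
    have htpos : 0 < (t:ℕ) := by
      have := Fin.lt_def.mp (Finset.mem_Ioi.mp htmem); simpa using this
    ext u v
    have ks := key (t:ℕ) u v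
    have hone : ∀ b ∈ Finset.Ioi (0 : Fin (n+1)), b ≠ t →
        ((1/2 : ℂ) * ((D b u v : ℝ) : ℂ) *
            (if (((t:ℕ):ℕ):ℤ) - ((b:ℕ):ℤ) = 0 then (2 * (Real.pi:ℂ)) else 0) +
         (1/2 : ℂ) * ((D b v u : ℝ) : ℂ) *
            (if (((t:ℕ):ℕ):ℤ) + ((b:ℕ):ℤ) = 0 then (2 * (Real.pi:ℂ)) else 0)) = 0 := by
      intro b hb hbt
      have hbpos : 0 < (b:ℕ) := by have := Fin.lt_def.mp (Finset.mem_Ioi.mp hb); simpa using this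
      have hbne : (b:ℕ) ≠ (t:ℕ) := fun hbt' => hbt (Fin.ext hbt')
      rw [if_neg (by omega), if_neg (by omega)]
      ring
    rw [if_neg (by omega), Finset.sum_eq_single_of_mem t htmem hone,
      if_pos (by omega), if_neg (by omega)] at ks
    have hpine : ((Real.pi:ℝ) : ℂ) ≠ 0 := by exact_mod_cast hpi.ne'
    have hD : ((D t u v : ℝ) : ℂ) = 0 := by
      have h' : ((D t u v : ℝ) : ℂ) * ((Real.pi:ℝ) : ℂ) = 0 := by linear_combination ks
      exact (mul_eq_zero.mp h').resolve_right hpine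
    have : D t u v = 0 := by exact_mod_cast hD
    simpa using this

lemma continuous_sigmaMat (S : Param m₁ m₂ n) : Continuous fun θ : ℝ => sigmaMat S θ := by
  unfold sigmaMat
  refine continuous_const.add (Continuous.fun_const_smul ?_ _)
  refine continuous_finset_sum _ fun t _ => ?_
  refine Continuous.add ?_ ?_
  · exact (Complex.continuous_exp.comp
      (((continuous_const.mul Complex.continuous_ofReal).neg).mul continuous_const)).smul
      continuous_const
  · exact (Complex.continuous_exp.comp
      ((continuous_const.mul Complex.continuous_ofReal).mul continuous_const)).smul
      continuous_const

lemma continuous_PhiP (N : ℕ) (y : ℕ → Idx m₁ m₂ → ℝ) :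
    Continuous fun θ : ℝ => PhiP m₁ m₂ n N y θ := by
  unfold PhiP
  refine continuous_const.add (Continuous.fun_const_smul ?_ _)
  refine continuous_finset_sum _ fun s _ => ?_
  refine Continuous.add ?_ ?_
  · exact (Complex.continuous_exp.comp
      (((continuous_const.mul Complex.continuous_ofReal).neg).mul continuous_const)).smul
      continuous_const
  · exact (Complex.continuous_exp.comp
      ((continuous_const.mul Complex.continuous_ofReal).mul continuous_const)).smul
      continuous_const

lemma continuousOn_integrand (N : ℕ) (y : ℕ → Idx m₁ m₂ → ℝ) (S : Param m₁ m₂ n)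
    (hS : ∀ θ ∈ Set.Icc (-Real.pi) Real.pi, (sigmaMat S θ).PosDef) :
    ContinuousOn (fun θ : ℝ => -Real.log ((sigmaMat S θ).det.re) +
      ((PhiP m₁ m₂ n N y θ) * sigmaMat S θ).trace.re) (Set.Icc (-Real.pi) Real.pi) := by
  apply ContinuousOn.add
  · apply ContinuousOn.neg
    apply ContinuousOn.log
    · exact (Complex.continuous_re.comp ((continuous_sigmaMat S).matrix_det)).continuousOn
    · intro θ hθ
      exact (posDef_det_re_pos (hS θ hθ)).ne'
  · exact (Complex.continuous_re.comp
      (((continuous_PhiP N y).matrix_mul (continuous_sigmaMat S)).matrix_trace)).continuousOn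

lemma convex_Qplus : Convex ℝ (Qplus m₁ m₂ n) := by
  intro S hS T hT a b ha hb hab
  rcases eq_or_lt_of_le ha with ha0 | ha0
  · have hb1 : b = 1 := by linarith
    have heq : a • S + b • T = T := by
      rw [← ha0, hb1]
      funext t
      simp
    rw [heq]
    exact hT
  rcases eq_or_lt_of_le hb with hb0 | hb0
  · have ha1 : a = 1 := by linarith
    have heq : a • S + b • T = S := by
      rw [← hb0, ha1]
      funext t
      simp
    rw [heq]
    exact hS
  · constructor
    · show ((a • S + b • T) 0)ᵀ = (a • S + b • T) 0
      simp only [Pi.add_apply, Pi.smul_apply, Matrix.transpose_add, Matrix.transpose_smul,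
        hS.1, hT.1]
    · intro θ hθ
      rw [sigmaMat_smul_add]
      exact (posDef_ofReal_smul ha0 (hS.2 θ hθ)).add (posDef_ofReal_smul hb0 (hT.2 θ hθ))

end SigmaAux

section PenaltyAux

variable {m₁ m₂ n : ℕ}

lemma abs_entry_le_qfun₁ (S : Param m₁ m₂ n) (h j : Fin m₁) (k l : Fin m₂) (t : Fin (n+1)) :
    |S t (h, k) (j, l)| ≤ qfun S h j k l :=
  le_trans (Finset.le_sup' (fun t : Fin (n+1) => |S t (h, k) (j, l)|) (Finset.mem_univ t))
    (le_max_of_le_left (le_max_left _ _))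
lemma abs_entry_le_qfun₂ (S : Param m₁ m₂ n) (h j : Fin m₁) (k l : Fin m₂) (t : Fin (n+1)) :
    |S t (h, l) (j, k)| ≤ qfun S h j k l :=
  le_trans (Finset.le_sup' (fun t : Fin (n+1) => |S t (h, l) (j, k)|) (Finset.mem_univ t))
    (le_max_of_le_left (le_max_right _ _))
lemma abs_entry_le_qfun₃ (S : Param m₁ m₂ n) (h j : Fin m₁) (k l : Fin m₂) (t : Fin (n+1)) :
    |S t (j, l) (h, k)| ≤ qfun S h j k l :=
  le_trans (Finset.le_sup' (fun t : Fin (n+1) => |S t (j, l) (h, k)|) (Finset.mem_univ t))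
    (le_max_of_le_right (le_max_left _ _))
lemma abs_entry_le_qfun₄ (S : Param m₁ m₂ n) (h j : Fin m₁) (k l : Fin m₂) (t : Fin (n+1)) :
    |S t (j, k) (h, l)| ≤ qfun S h j k l :=
  le_trans (Finset.le_sup' (fun t : Fin (n+1) => |S t (j, k) (h, l)|) (Finset.mem_univ t))
    (le_max_of_le_right (le_max_right _ _))

lemma qfun_combo_le (S T : Param m₁ m₂ n) {a b : ℝ} (ha : 0 ≤ a) (hb : 0 ≤ b)
    (h j : Fin m₁) (k l : Fin m₂) :
    qfun (a • S + b • T) h j k l ≤ a * qfun S h j k l + b * qfun T h j k l := by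
  have hentry : ∀ (t : Fin (n+1)) (p q : Idx m₁ m₂),
      |(a • S + b • T) t p q| ≤ a * |S t p q| + b * |T t p q| := by
    intro t p q
    simp only [Pi.add_apply, Pi.smul_apply, Matrix.add_apply, Matrix.smul_apply, smul_eq_mul]
    calc |a * S t p q + b * T t p q| ≤ |a * S t p q| + |b * T t p q| := abs_add_le _ _
      _ = a * |S t p q| + b * |T t p q| := by
          rw [abs_mul, abs_mul, abs_of_nonneg ha, abs_of_nonneg hb]
  unfold qfun
  refine max_le (max_le ?_ ?_) (max_le ?_ ?_) <;>
    refine Finset.sup'_le _ _ fun t _ => ?_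
  · exact le_trans (hentry t _ _) (add_le_add
      (mul_le_mul_of_nonneg_left (abs_entry_le_qfun₁ S h j k l t) ha)
      (mul_le_mul_of_nonneg_left (abs_entry_le_qfun₁ T h j k l t) hb))
  · exact le_trans (hentry t _ _) (add_le_add
      (mul_le_mul_of_nonneg_left (abs_entry_le_qfun₂ S h j k l t) ha)
      (mul_le_mul_of_nonneg_left (abs_entry_le_qfun₂ T h j k l t) hb))
  · exact le_trans (hentry t _ _) (add_le_add
      (mul_le_mul_of_nonneg_left (abs_entry_le_qfun₃ S h j k l t) ha)
      (mul_le_mul_of_nonneg_left (abs_entry_le_qfun₃ T h j k l t) hb))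
  · exact le_trans (hentry t _ _) (add_le_add
      (mul_le_mul_of_nonneg_left (abs_entry_le_qfun₄ S h j k l t) ha)
      (mul_le_mul_of_nonneg_left (abs_entry_le_qfun₄ T h j k l t) hb))

lemma gpen_combo_le (Λ : Matrix (Fin m₁) (Fin m₁) ℝ) (Γ : Matrix (Fin m₂) (Fin m₂) ℝ)
    (hΛ : ∀ h j, 0 ≤ Λ h j) (hΓ : ∀ k l, 0 ≤ Γ k l)
    (S T : Param m₁ m₂ n) {a b : ℝ} (ha : 0 ≤ a) (hb : 0 ≤ b) :
    gpen Λ Γ (a • S + b • T) ≤ a * gpen Λ Γ S + b * gpen Λ Γ T := by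
  unfold gpen
  rw [Finset.mul_sum, Finset.mul_sum, ← Finset.sum_add_distrib]
  refine Finset.sum_le_sum fun p _ => ?_
  have hw : 0 ≤ max (Λ p.1 p.2.2.1) (Γ p.2.1 p.2.2.2) := le_trans (hΛ _ _) (le_max_left _ _)
  calc max (Λ p.1 p.2.2.1) (Γ p.2.1 p.2.2.2) * qfun (a • S + b • T) p.1 p.2.2.1 p.2.1 p.2.2.2
      ≤ max (Λ p.1 p.2.2.1) (Γ p.2.1 p.2.2.2) *
        (a * qfun S p.1 p.2.2.1 p.2.1 p.2.2.2 + b * qfun T p.1 p.2.2.1 p.2.1 p.2.2.2) :=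
        mul_le_mul_of_nonneg_left (qfun_combo_le S T ha hb _ _ _ _) hw
    _ = a * (max (Λ p.1 p.2.2.1) (Γ p.2.1 p.2.2.2) * qfun S p.1 p.2.2.1 p.2.1 p.2.2.2) +
        b * (max (Λ p.1 p.2.2.1) (Γ p.2.1 p.2.2.2) * qfun T p.1 p.2.2.1 p.2.1 p.2.2.2) := by
        ring

end PenaltyAux

/-- for any fixed nonnegative symmetric weight matrices `Λ`, `Γ`, the
objective `S ↦ ℓ(y^N; S) + g(S; Λ, Γ)` of the regularized maximum-likelihood problem
is strictly convex on the convex set `Q⁺`. -/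
theorem regularized_ML_objective_strictConvexOn
    (m₁ m₂ n N : ℕ) (hm₁ : 1 ≤ m₁) (hm₂ : 1 ≤ m₂) (hn : 1 ≤ n) (hN : n < N)
    (y : ℕ → Idx m₁ m₂ → ℝ)
    (Λ : Matrix (Fin m₁) (Fin m₁) ℝ) (hΛsym : Λᵀ = Λ) (hΛ : ∀ h j, 0 ≤ Λ h j)
    (Γ : Matrix (Fin m₂) (Fin m₂) ℝ) (hΓsym : Γᵀ = Γ) (hΓ : ∀ k l, 0 ≤ Γ k l) :
    StrictConvexOn ℝ (Qplus m₁ m₂ n)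
      (fun S => ell m₁ m₂ n N y S + gpen Λ Γ S) := by
  have hpi : (0:ℝ) < Real.pi := Real.pi_pos
  have hicc : Set.uIcc (-Real.pi) Real.pi = Set.Icc (-Real.pi) Real.pi :=
    Set.uIcc_of_le (by linarith)
  set c : ℝ := ((N : ℝ) - (n : ℝ)) / (4 * Real.pi) with hcdef
  have hcpos : 0 < c := by
    apply div_pos
    · have : (n:ℝ) < (N:ℝ) := by exact_mod_cast hN
      linarith
    · linarith
  set F : Param m₁ m₂ n → ℝ → ℝ := fun P θ =>
    -Real.log ((sigmaMat P θ).det.re) + ((PhiP m₁ m₂ n N y θ) * sigmaMat P θ).trace.re with hFdef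
  have hell : ∀ P : Param m₁ m₂ n, ell m₁ m₂ n N y P =
      c * ∫ θ in (-Real.pi)..Real.pi, F P θ := fun P => rfl
  constructor
  · exact convex_Qplus
  · intro S hS T hT hne a b ha hb hab
    have hmidmem : (a • S + b • T) ∈ Qplus m₁ m₂ n := convex_Qplus hS hT ha.le hb.le hab
    have hcS := continuousOn_integrand N y S hS.2
    have hcT := continuousOn_integrand N y T hT.2
    have hcM := continuousOn_integrand N y (a • S + b • T) hmidmem.2
    have htr : ∀ θ : ℝ, ((PhiP m₁ m₂ n N y θ) * sigmaMat (a • S + b • T) θ).trace.re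
        = a * ((PhiP m₁ m₂ n N y θ) * sigmaMat S θ).trace.re
          + b * ((PhiP m₁ m₂ n N y θ) * sigmaMat T θ).trace.re := by
      intro θ
      rw [sigmaMat_smul_add, Matrix.mul_add, Matrix.mul_smul, Matrix.mul_smul,
        Matrix.trace_add, Matrix.trace_smul, Matrix.trace_smul]
      simp [smul_eq_mul, Complex.add_re, Complex.mul_re]
    have hptle : ∀ θ ∈ Set.Icc (-Real.pi) Real.pi,
        F (a • S + b • T) θ ≤ a * F S θ + b * F T θ := by
      intro θ hθ
      have hld := logdet_concave_le (hS.2 θ hθ) (hT.2 θ hθ) ha hb hab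
      rw [← sigmaMat_smul_add] at hld
      simp only [hFdef]
      have := htr θ
      linarith
    have hexists : ∃ θ ∈ Set.Icc (-Real.pi) Real.pi, sigmaMat S θ ≠ sigmaMat T θ := by
      by_contra hcon
      push_neg at hcon
      apply hne
      have hDzero : S - T = 0 := by
        apply param_zero_of_sigmaMat_zero
        intro θ hθ
        rw [sigmaMat_sub, hcon θ hθ, sub_self]
      exact sub_eq_zero.mp hDzero
    obtain ⟨θ₀, hθ₀, hneθ⟩ := hexists
    have hstrict : F (a • S + b • T) θ₀ < a * F S θ₀ + b * F T θ₀ := by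
      have hld := logdet_strict_concave (hS.2 θ₀ hθ₀) (hT.2 θ₀ hθ₀) hneθ ha hb hab
      rw [← sigmaMat_smul_add] at hld
      simp only [hFdef]
      have := htr θ₀
      linarith
    have hIS : IntervalIntegrable (F S) volume (-Real.pi) Real.pi := by
      apply ContinuousOn.intervalIntegrable
      rw [hicc]
      exact hcS
    have hIT : IntervalIntegrable (F T) volume (-Real.pi) Real.pi := by
      apply ContinuousOn.intervalIntegrable
      rw [hicc]
      exact hcT
    have hlt : (∫ θ in (-Real.pi)..Real.pi, F (a • S + b • T) θ) <
        ∫ θ in (-Real.pi)..Real.pi, (a * F S θ + b * F T θ) := by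
      apply intervalIntegral.integral_lt_integral_of_continuousOn_of_le_of_exists_lt
        (by linarith) hcM
        ((continuousOn_const.mul hcS).add (continuousOn_const.mul hcT))
        (fun θ hθ => hptle θ (Set.Ioc_subset_Icc_self hθ))
      exact ⟨θ₀, hθ₀, hstrict⟩
    have hsplit : (∫ θ in (-Real.pi)..Real.pi, (a * F S θ + b * F T θ))
        = a * (∫ θ in (-Real.pi)..Real.pi, F S θ) +
          b * ∫ θ in (-Real.pi)..Real.pi, F T θ := by
      rw [intervalIntegral.integral_add (hIS.const_mul a) (hIT.const_mul b),
        intervalIntegral.integral_const_mul, intervalIntegral.integral_const_mul]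
    have hg := gpen_combo_le Λ Γ hΛ hΓ S T ha.le hb.le
    have hmul : c * (∫ θ in (-Real.pi)..Real.pi, F (a • S + b • T) θ) <
        c * (a * (∫ θ in (-Real.pi)..Real.pi, F S θ) +
          b * ∫ θ in (-Real.pi)..Real.pi, F T θ) := by
      apply mul_lt_mul_of_pos_left _ hcpos
      rw [← hsplit]
      exact hlt
    show ell m₁ m₂ n N y (a • S + b • T) + gpen Λ Γ (a • S + b • T) <
      a • (ell m₁ m₂ n N y S + gpen Λ Γ S) + b • (ell m₁ m₂ n N y T + gpen Λ Γ T)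
    rw [smul_eq_mul, smul_eq_mul, hell, hell, hell]
    have hrhs : a * (c * (∫ θ in (-Real.pi)..Real.pi, F S θ) + gpen Λ Γ S) +
        b * (c * (∫ θ in (-Real.pi)..Real.pi, F T θ) + gpen Λ Γ T) =
        c * (a * (∫ θ in (-Real.pi)..Real.pi, F S θ) +
          b * ∫ θ in (-Real.pi)..Real.pi, F T θ) +
        (a * gpen Λ Γ S + b * gpen Λ Γ T) := by ring
    rw [hrhs]
    linarith

end KroneckerGM
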